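/- Let Δ ⊆ ℝ^d be a nonempty convex compact set with diam(Δ) > 0, R : Δ → ℝ convex and L-Lipschitz for ‖·‖₂, R̄(δ) = inf_{δ'∈Δ}{R(δ') + L‖δ−δ'‖₂}, η > 0, and let C = conv(Λ) + B(0, 2η·diam(Δ)) where Λ = ∪_{δ∈Δ̄} ∂R̄(δ), conv denotes the convex hull, and B(0,r) the closed Euclidean ball of radius r. For any λ_t ∈ ℝ^d and δ_t ∈ Δ, let γ_t be any maximizer of γ ↦ ⟨λ_t, γ⟩ − R̄(γ) over Δ_{δ_t}, and set λ_{t+1} = λ_t + η(δ_t − γ_t). Then dist(λ_{t+1}, C) ≤ dist(λ_t, C), where dist is the Euclidean distance to a set. -/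

import Mathlib

open Metric Set
open scoped RealInnerProductSpace Pointwise

variable {E : Type*} [NormedAddCommGroup E] [InnerProductSpace ℝ E]

set_option maxHeartbeats 2000000 in
/-- Key convex-analysis lemma: if `γt` maximizes `z ↦ ⟪λ, z⟫ - Rb z` over the ball
of center `δt` and radius `r`, with `Rb` convex and `c`-Lipschitz, then
`λ = g + β • (γt - δt)` for some global subgradient `g` of `Rb` at `γt` and `β ≥ 0`. -/
theorem subgradDecomp (Rb : E → ℝ) (c : ℝ) (hc : 0 ≤ c)
    (hconv : ∀ x y : E, ∀ a b : ℝ, 0 ≤ a → 0 ≤ b → a + b = 1 →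
      Rb (a • x + b • y) ≤ a * Rb x + b * Rb y)
    (hlip : ∀ x y : E, Rb x ≤ Rb y + c * ‖x - y‖)
    (r : ℝ) (hr : 0 < r) (δt γt lam : E) (hγ : ‖γt - δt‖ ≤ r)
    (hmax : ∀ z : E, ‖z - δt‖ ≤ r → ⟪lam, z⟫ - Rb z ≤ ⟪lam, γt⟫ - Rb γt) :
    ∃ g : E, ∃ β : ℝ, 0 ≤ β ∧ lam = g + β • (γt - δt) ∧
      ∀ y, Rb γt + ⟪g, y - γt⟫ ≤ Rb y := by
  set w : E := γt - δt with hw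
  set q : E → ℝ := fun v => Rb (γt + v) - Rb γt with hq
  -- basic facts about q
  have hmax' : ∀ v : E, ‖w + v‖ ≤ r → ⟪lam, v⟫ ≤ q v := by
    intro v hv
    have h1 : ‖(γt + v) - δt‖ ≤ r := by
      have : (γt + v) - δt = w + v := by rw [hw]; abel
      rw [this]; exact hv
    have h2 := hmax (γt + v) h1
    have h3 : ⟪lam, γt + v⟫ = ⟪lam, γt⟫ + ⟪lam, v⟫ := inner_add_right _ _ _
    simp only [hq]
    linarith [h2, h3.le, h3.ge]
  have hqconv : ∀ x y : E, ∀ a b : ℝ, 0 ≤ a → 0 ≤ b → a + b = 1 →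
      q (a • x + b • y) ≤ a * q x + b * q y := by
    intro x y a b ha hb hab
    have hv : γt + (a • x + b • y) = a • (γt + x) + b • (γt + y) := by
      rw [smul_add, smul_add]
      rw [show a • γt + a • x + (b • γt + b • y) = (a+b) • γt + (a • x + b • y) by
        rw [add_smul]; abel]
      rw [hab, one_smul]
    have h2 : a * Rb γt + b * Rb γt = Rb γt := by rw [← add_mul, hab, one_mul]
    have := hconv (γt + x) (γt + y) a b ha hb hab
    simp only [hq]
    rw [hv]
    linarith [this, h2.le, h2.ge]
  have hqlip : ∀ u v : E, q u ≤ q v + c * ‖u - v‖ := by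
    intro u v
    have := hlip (γt + u) (γt + v)
    have h1 : (γt + u) - (γt + v) = u - v := by abel
    simp only [hq]
    rw [← h1]; linarith
  have hq0 : q 0 = 0 := by simp [hq]
  -- monotonicity of difference quotients
  have hqmono : ∀ (v : E) (s t : ℝ), 0 < s → s ≤ t → t * q (s • v) ≤ s * q (t • v) := by
    intro v s t hs hst
    have ht : 0 < t := lt_of_lt_of_le hs hst
    have h1 : (0:ℝ) ≤ s / t := by positivity
    have h2 : (0:ℝ) ≤ 1 - s / t := by
      rw [sub_nonneg]; exact div_le_one_of_le₀ hst ht.le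
    have h3 : s / t + (1 - s / t) = 1 := by ring
    have h4 : (s/t) • (t • v) + (1 - s/t) • (0:E) = s • v := by
      rw [smul_zero, add_zero, smul_smul, div_mul_cancel₀ s ht.ne']
    have h5 := hqconv (t • v) 0 (s/t) (1 - s/t) h1 h2 h3
    rw [h4, hq0] at h5
    have h6 := mul_le_mul_of_nonneg_left h5 ht.le
    have h7 : t * (s / t * q (t • v) + (1 - s / t) * 0) = s * q (t • v) := by
      field_simp; ring
    rw [h7] at h6
    exact h6
  have hqmono' : ∀ (v : E) (s t : ℝ), 0 < s → s ≤ t →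
      s⁻¹ * q (s • v) ≤ t⁻¹ * q (t • v) := by
    intro v s t hs hst
    have ht : 0 < t := lt_of_lt_of_le hs hst
    rw [inv_mul_eq_div, inv_mul_eq_div, div_le_div_iff₀ hs ht]
    nlinarith [hqmono v s t hs hst]
  -- the directional derivative functional D
  set D : E → ℝ := fun v => sInf ((fun t : ℝ => t⁻¹ * q (t • v)) '' Ioi (0:ℝ)) with hD
  have hDlb : ∀ (v : E) (t : ℝ), 0 < t → -(c * ‖v‖) ≤ t⁻¹ * q (t • v) := by
    intro v t ht
    have h1 : q 0 ≤ q (t • v) + c * ‖(0:E) - t • v‖ := hqlip 0 (t • v)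
    have h2 : ‖(0:E) - t • v‖ = t * ‖v‖ := by
      rw [zero_sub, norm_neg, norm_smul, Real.norm_eq_abs, abs_of_pos ht]
    rw [hq0, h2] at h1
    have h3 : -(c * (t * ‖v‖)) ≤ q (t • v) := by linarith
    have h4 := mul_le_mul_of_nonneg_left h3 (inv_nonneg.mpr ht.le)
    calc -(c * ‖v‖) = t⁻¹ * -(c * (t * ‖v‖)) := by field_simp
      _ ≤ t⁻¹ * q (t • v) := h4
  have hDbdd : ∀ v : E, BddBelow ((fun t : ℝ => t⁻¹ * q (t • v)) '' Ioi (0:ℝ)) := by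
    intro v
    refine ⟨-(c * ‖v‖), ?_⟩
    rintro x ⟨t, ht, rfl⟩
    exact hDlb v t ht
  have hDne : ∀ v : E, ((fun t : ℝ => t⁻¹ * q (t • v)) '' Ioi (0:ℝ)).Nonempty := by
    intro v
    exact ⟨_, ⟨1, by norm_num, rfl⟩⟩
  have hDle : ∀ (v : E) (t : ℝ), 0 < t → D v ≤ t⁻¹ * q (t • v) := by
    intro v t ht
    exact csInf_le (hDbdd v) ⟨t, ht, rfl⟩
  have hleD : ∀ (v : E) (b : ℝ), (∀ t : ℝ, 0 < t → b ≤ t⁻¹ * q (t • v)) → b ≤ D v := by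
    intro v b h
    refine le_csInf (hDne v) ?_
    rintro x ⟨t, ht, rfl⟩
    exact h t ht
  have hDleq : ∀ v : E, D v ≤ q v := by
    intro v
    have := hDle v 1 one_pos
    simpa using this
  -- D is subadditive
  have hDadd : ∀ u v : E, D (u + v) ≤ D u + D v := by
    intro u v
    refine le_of_forall_pos_le_add ?_
    intro ε hε
    obtain ⟨x1, ⟨t1, ht1, rfl⟩, hx1⟩ := exists_lt_of_csInf_lt (hDne u)
      (show D u < D u + ε/2 by linarith)
    obtain ⟨x2, ⟨t2, ht2, rfl⟩, hx2⟩ := exists_lt_of_csInf_lt (hDne v)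
      (show D v < D v + ε/2 by linarith)
    have ht1' : (0:ℝ) < t1 := ht1
    have ht2' : (0:ℝ) < t2 := ht2
    set t : ℝ := min t1 t2 / 2 with htdef
    have ht : 0 < t := half_pos (lt_min ht1' ht2')
    have h2t1 : 2 * t ≤ t1 := by
      have := min_le_left t1 t2; rw [htdef]; linarith
    have h2t2 : 2 * t ≤ t2 := by
      have := min_le_right t1 t2; rw [htdef]; linarith
    have hsplit : t • (u + v) = (2⁻¹ : ℝ) • ((2*t) • u) + (2⁻¹ : ℝ) • ((2*t) • v) := by
      module
    have h1 : q (t • (u + v)) ≤ 2⁻¹ * q ((2*t) • u) + 2⁻¹ * q ((2*t) • v) := by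
      rw [hsplit]
      exact hqconv _ _ _ _ (by norm_num) (by norm_num) (by norm_num)
    have h2 : D (u + v) ≤ t⁻¹ * q (t • (u + v)) := hDle _ t ht
    have h3 : t⁻¹ * q (t • (u + v)) ≤ (2*t)⁻¹ * q ((2*t) • u) + (2*t)⁻¹ * q ((2*t) • v) := by
      have := mul_le_mul_of_nonneg_left h1 (inv_nonneg.mpr ht.le)
      have he : t⁻¹ * (2⁻¹ * q ((2*t) • u) + 2⁻¹ * q ((2*t) • v))
          = (2*t)⁻¹ * q ((2*t) • u) + (2*t)⁻¹ * q ((2*t) • v) := by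
        rw [mul_inv]; ring
      linarith [this, he.le, he.ge]
    have h4 : (2*t)⁻¹ * q ((2*t) • u) ≤ t1⁻¹ * q (t1 • u) :=
      hqmono' u (2*t) t1 (by linarith) h2t1
    have h5 : (2*t)⁻¹ * q ((2*t) • v) ≤ t2⁻¹ * q (t2 • v) :=
      hqmono' v (2*t) t2 (by linarith) h2t2
    have hx1' : t1⁻¹ * q (t1 • u) < D u + ε/2 := hx1
    have hx2' : t2⁻¹ * q (t2 • v) < D v + ε/2 := hx2
    linarith
  -- D is positively homogeneous
  have hDsmul_le : ∀ (s : ℝ), 0 < s → ∀ v : E, D (s • v) ≤ s * D v := by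
    intro s hs v
    have key : ∀ t : ℝ, 0 < t → s⁻¹ * D (s • v) ≤ t⁻¹ * q (t • v) := by
      intro t ht
      have h1 : D (s • v) ≤ (t/s)⁻¹ * q ((t/s) • (s • v)) := hDle _ (t/s) (by positivity)
      have h2 : (t/s) • (s • v) = t • v := by
        rw [smul_smul, div_mul_cancel₀ t hs.ne']
      have h3 : (t/s)⁻¹ = s * t⁻¹ := by
        rw [div_eq_mul_inv, mul_inv, inv_inv]; ring
      rw [h2, h3] at h1
      have h4 := mul_le_mul_of_nonneg_left h1 (inv_nonneg.mpr hs.le)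
      have h5 : s⁻¹ * (s * t⁻¹ * q (t • v)) = t⁻¹ * q (t • v) := by
        field_simp
      linarith [h4, h5.le, h5.ge]
    have := hleD v _ key
    have h6 := mul_le_mul_of_nonneg_left this hs.le
    have h7 : s * (s⁻¹ * D (s • v)) = D (s • v) := by field_simp
    linarith [h6, h7.le, h7.ge]
  have hDsmul : ∀ (s : ℝ), 0 < s → ∀ v : E, D (s • v) = s * D v := by
    intro s hs v
    refine le_antisymm (hDsmul_le s hs v) ?_
    have h1 := hDsmul_le s⁻¹ (by positivity) (s • v)
    have h2 : s⁻¹ • s • v = v := by rw [smul_smul, inv_mul_cancel₀ hs.ne', one_smul]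
    rw [h2] at h1
    have h3 := mul_le_mul_of_nonneg_left h1 hs.le
    have h4 : s * (s⁻¹ * D (s • v)) = D (s • v) := by field_simp
    linarith
  -- D is c-Lipschitz-like
  have hDlip : ∀ u v : E, D u ≤ D v + c * ‖u - v‖ := by
    intro u v
    have key : ∀ t : ℝ, 0 < t → D u - c * ‖u - v‖ ≤ t⁻¹ * q (t • v) := by
      intro t ht
      have h1 : D u ≤ t⁻¹ * q (t • u) := hDle u t ht
      have h2 : q (t • u) ≤ q (t • v) + c * ‖t • u - t • v‖ := hqlip _ _
      have h3 : ‖t • u - t • v‖ = t * ‖u - v‖ := by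
        rw [← smul_sub, norm_smul, Real.norm_eq_abs, abs_of_pos ht]
      rw [h3] at h2
      have h4 := mul_le_mul_of_nonneg_left h2 (inv_nonneg.mpr ht.le)
      have h5 : t⁻¹ * (q (t • v) + c * (t * ‖u - v‖)) = t⁻¹ * q (t • v) + c * ‖u - v‖ := by
        field_simp
      linarith [h4, h5.le, h5.ge]
    have := hleD v _ key
    linarith
  -- trivial case: γt = δt
  by_cases hw0 : w = 0
  · refine ⟨lam, 0, le_refl 0, by simp, ?_⟩
    intro y
    set v : E := y - γt with hv
    have hy : γt + v = y := by rw [hv]; abel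
    -- choose small t
    set t : ℝ := min 1 (r / (‖v‖ + 1)) with ht0
    have ht : 0 < t := lt_min one_pos (by positivity)
    have ht1 : t ≤ 1 := min_le_left _ _
    have hball : ‖w + t • v‖ ≤ r := by
      rw [hw0, zero_add, norm_smul, Real.norm_eq_abs, abs_of_pos ht]
      have h1 : t ≤ r / (‖v‖ + 1) := min_le_right _ _
      have h2 : t * ‖v‖ ≤ (r / (‖v‖ + 1)) * ‖v‖ :=
        mul_le_mul_of_nonneg_right h1 (norm_nonneg v)
      have h3 : (r / (‖v‖ + 1)) * ‖v‖ ≤ r := by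
        rw [div_mul_eq_mul_div, div_le_iff₀ (by positivity)]
        nlinarith [norm_nonneg v, hr.le]
      linarith
    have h4 : ⟪lam, t • v⟫ ≤ q (t • v) := hmax' (t • v) hball
    have h5 : ⟪lam, t • v⟫ = t * ⟪lam, v⟫ := real_inner_smul_right _ _ _
    have h6 : 1 * q (t • v) ≤ t * q ((1:ℝ) • v) := hqmono v t 1 ht ht1
    rw [one_mul, one_smul] at h6
    have h7 : t * ⟪lam, v⟫ ≤ t * q v := by linarith
    have h8 : ⟪lam, v⟫ ≤ q v := le_of_mul_le_mul_left (by linarith) ht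
    have h9 : q v = Rb y - Rb γt := by rw [hq]; simp only; rw [hy]
    rw [hv] at h8
    linarith [h8, h9.le, h9.ge]
  -- main case: γt on (or near) the boundary, w ≠ 0
  · have hwpos : 0 < ‖w‖ := norm_pos_iff.mpr hw0
    have hw2 : (0:ℝ) < ‖w‖ ^ 2 := by positivity
    -- the core inequality on the open half-space
    have hcore : ∀ v : E, ⟪w, v⟫ < 0 → ⟪lam, v⟫ ≤ D v := by
      intro v hv
      refine hleD v _ ?_
      intro t ht
      have hvne : v ≠ 0 := by
        intro h; rw [h, inner_zero_right] at hv; exact lt_irrefl 0 hv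
      have hvpos : (0:ℝ) < ‖v‖ ^ 2 := pow_pos (norm_pos_iff.mpr hvne) 2
      set t0 : ℝ := -(2 * ⟪w, v⟫) / ‖v‖ ^ 2 with ht0def
      have ht0 : 0 < t0 := by
        rw [ht0def]
        apply div_pos (by linarith) hvpos
      set s : ℝ := min t t0 with hsdef
      have hs : 0 < s := lt_min ht ht0
      have hst : s ≤ t := min_le_left _ _
      have hst0 : s ≤ t0 := min_le_right _ _
      have hball : ‖w + s • v‖ ≤ r := by
        have hsq : ‖w + s • v‖ ^ 2 = ‖w‖ ^ 2 + 2 * (s * ⟪w, v⟫) + s ^ 2 * ‖v‖ ^ 2 := by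
          rw [norm_add_sq_real, real_inner_smul_right, norm_smul, Real.norm_eq_abs,
            abs_of_pos hs, mul_pow]
        have hsv : s * ‖v‖ ^ 2 ≤ -(2 * ⟪w, v⟫) := by
          have := mul_le_mul_of_nonneg_right hst0 hvpos.le
          rw [ht0def, div_mul_cancel₀ _ hvpos.ne'] at this
          exact this
        have h1 : 2 * (s * ⟪w, v⟫) + s ^ 2 * ‖v‖ ^ 2 ≤ 0 := by nlinarith [hs]
        have h2 : ‖w + s • v‖ ^ 2 ≤ r ^ 2 := by
          have hwr : ‖w‖ ≤ r := hγ
          nlinarith [hsq, h1, hwr, norm_nonneg w]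
        have := Real.sqrt_le_sqrt h2
        rwa [Real.sqrt_sq (norm_nonneg _), Real.sqrt_sq hr.le] at this
      have h4 : ⟪lam, s • v⟫ ≤ q (s • v) := hmax' (s • v) hball
      have h5 : s * ⟪lam, v⟫ ≤ q (s • v) := by
        rw [← real_inner_smul_right]; exact h4
      have h6 : s⁻¹ * q (s • v) ≤ t⁻¹ * q (t • v) := hqmono' v s t hs hst
      have h7 : s⁻¹ * (s * ⟪lam, v⟫) ≤ s⁻¹ * q (s • v) :=
        mul_le_mul_of_nonneg_left h5 (inv_nonneg.mpr hs.le)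
      have h8 : s⁻¹ * (s * ⟪lam, v⟫) = ⟪lam, v⟫ := by field_simp
      linarith
    -- extension to the closed half-space
    have hcore0 : ∀ v : E, ⟪w, v⟫ ≤ 0 → ⟪lam, v⟫ ≤ D v := by
      intro v hv
      refine le_of_forall_pos_le_add ?_
      intro ε hε
      set M : ℝ := c * ‖w‖ + |⟪lam, w⟫| + 1 with hM
      have hMpos : 0 < M := by
        rw [hM]; positivity
      set δ : ℝ := ε / M with hδ
      have hδpos : 0 < δ := div_pos hε hMpos
      set v' : E := v - δ • w with hv'
      have hinner : ⟪w, v'⟫ < 0 := by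
        rw [hv', inner_sub_right, real_inner_smul_right, real_inner_self_eq_norm_sq]
        nlinarith [hv, hδpos, hw2]
      have h1 : ⟪lam, v'⟫ ≤ D v' := hcore v' hinner
      have h2 : D v' ≤ D v + c * ‖v' - v‖ := hDlip v' v
      have h3 : ‖v' - v‖ = δ * ‖w‖ := by
        rw [hv']
        rw [show v - δ • w - v = -(δ • w) by abel]
        rw [norm_neg, norm_smul, Real.norm_eq_abs, abs_of_pos hδpos]
      have h4 : ⟪lam, v'⟫ = ⟪lam, v⟫ - δ * ⟪lam, w⟫ := by
        rw [hv', inner_sub_right, real_inner_smul_right]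
      have h5 : δ * (c * ‖w‖ + ⟪lam, w⟫) ≤ δ * M := by
        apply mul_le_mul_of_nonneg_left _ hδpos.le
        rw [hM]
        have := le_abs_self ⟪lam, w⟫
        linarith
      have h6 : δ * M = ε := by
        rw [hδ, div_mul_cancel₀ _ hMpos.ne']
      rw [h3] at h2
      rw [h4] at h1
      nlinarith [h1, h2, h5, h6]
    -- superadditivity of He v = ⟪lam, v⟫ - D v used via hDadd directly
    set He : E → ℝ := fun v => ⟪lam, v⟫ - D v with hHe
    have hHesmul : ∀ (s : ℝ), 0 < s → ∀ v : E, He (s • v) = s * He v := by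
      intro s hs v
      rw [hHe]; simp only
      rw [real_inner_smul_right, hDsmul s hs v]; ring
    have hHeadd : ∀ u v : E, He u + He v ≤ He (u + v) := by
      intro u v
      rw [hHe]; simp only
      rw [inner_add_right]
      have := hDadd u v
      linarith
    have hHeK : ∀ v : E, ⟪w, v⟫ ≤ 0 → He v ≤ 0 := by
      intro v hv
      have := hcore0 v hv
      rw [hHe]; simp only; linarith
    -- the slice and its sup
    set v0 : E := (‖w‖ ^ 2)⁻¹ • w with hv0
    have hv0w : ⟪w, v0⟫ = 1 := by
      rw [hv0, real_inner_smul_right, real_inner_self_eq_norm_sq, inv_mul_cancel₀ hw2.ne']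
    have hub : ∀ u : E, ⟪w, u⟫ = -1 → ∀ v : E, ⟪w, v⟫ = 1 → He v ≤ -He u := by
      intro u hu v hv
      have h1 : ⟪w, v + u⟫ ≤ 0 := by
        rw [inner_add_right, hu, hv]; norm_num
      have h2 := hHeK (v + u) h1
      have h3 := hHeadd v u
      linarith
    have hnv0 : ⟪w, -v0⟫ = -1 := by rw [inner_neg_right, hv0w]
    set Sl : Set ℝ := He '' {v : E | ⟪w, v⟫ = 1} with hSl
    have hSlne : Sl.Nonempty := ⟨He v0, v0, hv0w, rfl⟩
    have hSlbdd : BddAbove Sl := by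
      refine ⟨-He (-v0), ?_⟩
      rintro x ⟨v, hv, rfl⟩
      exact hub (-v0) hnv0 v hv
    set S : ℝ := sSup Sl with hS
    set α : ℝ := max 0 S with hα
    have hα0 : 0 ≤ α := le_max_left _ _
    -- the key pointwise bound
    have hkey : ∀ v : E, He v ≤ α * ⟪w, v⟫ := by
      intro v
      rcases lt_trichotomy (⟪w, v⟫) 0 with hneg | hzero | hpos
      · set σ : ℝ := -⟪w, v⟫ with hσ
        have hσpos : 0 < σ := by rw [hσ]; linarith
        set u : E := σ⁻¹ • v with hu
        have huw : ⟪w, u⟫ = -1 := by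
          rw [hu, real_inner_smul_right]
          rw [show ⟪w, v⟫ = -σ by rw [hσ]; ring]
          field_simp
        have hvu : v = σ • u := by
          rw [hu, smul_smul, mul_inv_cancel₀ hσpos.ne', one_smul]
        have h1 : He v = σ * He u := by
          have := hHesmul σ hσpos u
          rw [← hvu] at this
          exact this
        have h2 : He u ≤ 0 := hHeK u (by rw [huw]; norm_num)
        have h3 : S ≤ -He u := csSup_le hSlne (by
          rintro x ⟨v', hv', rfl⟩
          exact hub u huw v' hv')
        have h4 : α ≤ -He u := max_le (by linarith) h3
        have h5 : He u ≤ -α := by linarith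
        have h6 : σ * He u ≤ σ * (-α) := mul_le_mul_of_nonneg_left h5 hσpos.le
        have h7 : α * ⟪w, v⟫ = σ * (-α) := by
          rw [show (⟪w, v⟫ : ℝ) = -σ from by rw [hσ]; ring]
          ring
        linarith [h1.le, h1.ge, h6, h7.le, h7.ge]
      · rw [hzero, mul_zero]
        exact hHeK v hzero.le
      · set u : E := (⟪w, v⟫)⁻¹ • v with hu
        have huw : ⟪w, u⟫ = 1 := by
          rw [hu, real_inner_smul_right, inv_mul_cancel₀ hpos.ne']
        have hvu : v = ⟪w, v⟫ • u := by
          rw [hu, smul_smul, mul_inv_cancel₀ hpos.ne', one_smul]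
        have h1 : He u ≤ S := le_csSup hSlbdd ⟨u, huw, rfl⟩
        have h2 : He u ≤ α := le_trans h1 (le_max_right _ _)
        have h3 : He v = ⟪w, v⟫ * He u := by
          have := hHesmul (⟪w, v⟫) hpos u
          rw [← hvu] at this
          exact this
        have h4 : ⟪w, v⟫ * He u ≤ ⟪w, v⟫ * α := mul_le_mul_of_nonneg_left h2 hpos.le
        have h5 : ⟪w, v⟫ * α = α * ⟪w, v⟫ := mul_comm _ _
        linarith [h3.le, h3.ge, h4, h5.le, h5.ge]
    -- conclude
    refine ⟨lam - α • w, α, hα0, by rw [hw]; abel, ?_⟩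
    intro y
    set v : E := y - γt with hv
    have hy : γt + v = y := by rw [hv]; abel
    have h1 : He v ≤ α * ⟪w, v⟫ := hkey v
    have h2 : ⟪lam - α • w, v⟫ = ⟪lam, v⟫ - α * ⟪w, v⟫ := by
      rw [inner_sub_left, real_inner_smul_left]
    have h3 : D v ≤ q v := hDleq v
    have h4 : q v = Rb y - Rb γt := by rw [hq]; simp only; rw [hy]
    have h5 : He v = ⟪lam, v⟫ - D v := rfl
    rw [hv] at h2
    linarith [h1, h2.le, h2.ge, h3, h4.le, h4.ge, h5.le, h5.ge]


set_option maxHeartbeats 2000000 in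
/-- one-step contraction toward `C`: one step of the dual update
`λ_{t+1} = λ_t + η(δ_t − γ_t)`, where `γ_t` maximizes `γ ↦ ⟨λ_t, γ⟩ − R̄(γ)` over the
closed ball `Δ_{δ_t}` of center `δ_t ∈ Δ` and radius `diam Δ > 0`, does not increase
the distance to the set `C = conv(Λ) + B(0, 2η·diam Δ)`, where
`Λ = ∪_{δ ∈ Δ̄} ∂R̄(δ)`. -/
theorem stmt3 {d : ℕ} (Δ : Set (EuclideanSpace ℝ (Fin d)))
    (hΔne : Δ.Nonempty) (hΔconv : Convex ℝ Δ) (hΔcomp : IsCompact Δ)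
    (hdiam : 0 < diam Δ)
    (L : NNReal) (R : EuclideanSpace ℝ (Fin d) → ℝ)
    (hRconv : ConvexOn ℝ Δ R) (hRlip : LipschitzOnWith L R Δ)
    (Rbar : EuclideanSpace ℝ (Fin d) → ℝ)
    (hRbar : ∀ δ, Rbar δ =
      ⨅ δ' : Δ, (R δ' + (L : ℝ) * ‖δ - (δ' : EuclideanSpace ℝ (Fin d))‖))
    (η : ℝ) (hη : 0 < η)
    (Λ : Set (EuclideanSpace ℝ (Fin d)))
    (hΛ : Λ = ⋃ δ' ∈ (⋃ δ'' ∈ Δ, closedBall δ'' (diam Δ)),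
      {l : EuclideanSpace ℝ (Fin d) | ∀ y, Rbar δ' + ⟪l, y - δ'⟫ ≤ Rbar y})
    (C : Set (EuclideanSpace ℝ (Fin d)))
    (hC : C = convexHull ℝ Λ + closedBall 0 (2 * η * diam Δ))
    (lamt δt γt lamt1 : EuclideanSpace ℝ (Fin d))
    (hδt : δt ∈ Δ)
    (hγmem : γt ∈ closedBall δt (diam Δ))
    (hγmax : ∀ g ∈ closedBall δt (diam Δ),
      ⟪lamt, g⟫ - Rbar g ≤ ⟪lamt, γt⟫ - Rbar γt)
    (hrec : lamt1 = lamt + η • (δt - γt)) :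
    Metric.infDist lamt1 C ≤ Metric.infDist lamt C := by
  classical
  haveI : Nonempty ↥Δ := hΔne.to_subtype
  have hL : (0:ℝ) ≤ (L:ℝ) := L.2
  -- lower bound for the infimum
  obtain ⟨δ₀, hδ₀, hmin⟩ := hΔcomp.exists_isMinOn hΔne hRlip.continuousOn
  have hmin' : ∀ x ∈ Δ, R δ₀ ≤ R x := isMinOn_iff.mp hmin
  have hbdd : ∀ x : EuclideanSpace ℝ (Fin d), BddBelow (Set.range fun δ' : Δ => R δ' + (L:ℝ) * ‖x - (δ' : EuclideanSpace ℝ (Fin d))‖) := by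
    intro x
    refine ⟨R δ₀, ?_⟩
    rintro _ ⟨i, rfl⟩
    show R δ₀ ≤ R (i : EuclideanSpace ℝ (Fin d)) + (L:ℝ) * ‖x - (i : EuclideanSpace ℝ (Fin d))‖
    have h1 := hmin' i i.2
    have h2 : (0:ℝ) ≤ (L:ℝ) * ‖x - (i : EuclideanSpace ℝ (Fin d))‖ := by positivity
    linarith
  have hRbarle : ∀ (x : EuclideanSpace ℝ (Fin d)) (i : ↥Δ), Rbar x ≤ R i + (L:ℝ) * ‖x - (i : EuclideanSpace ℝ (Fin d))‖ := by
    intro x i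
    rw [hRbar]
    exact ciInf_le (hbdd x) i
  have hRbarge : ∀ (x : EuclideanSpace ℝ (Fin d)) (b : ℝ), (∀ i : ↥Δ, b ≤ R i + (L:ℝ) * ‖x - (i : EuclideanSpace ℝ (Fin d))‖) → b ≤ Rbar x := by
    intro x b h
    rw [hRbar]
    exact le_ciInf h
  -- Rbar is Lipschitz
  have hlip : ∀ x y : EuclideanSpace ℝ (Fin d), Rbar x ≤ Rbar y + (L:ℝ) * ‖x - y‖ := by
    intro x y
    have key : Rbar x - (L:ℝ) * ‖x - y‖ ≤ Rbar y := by
      refine hRbarge y _ ?_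
      intro i
      have h1 := hRbarle x i
      have h2 : ‖x - (i : EuclideanSpace ℝ (Fin d))‖ ≤ ‖x - y‖ + ‖y - (i : EuclideanSpace ℝ (Fin d))‖ := by
        have := dist_triangle x y (i : EuclideanSpace ℝ (Fin d))
        simpa [dist_eq_norm] using this
      nlinarith [h1, h2, hL]
    linarith
  -- Rbar is convex
  have hconv : ∀ x y : EuclideanSpace ℝ (Fin d), ∀ a b : ℝ, 0 ≤ a → 0 ≤ b → a + b = 1 →
      Rbar (a • x + b • y) ≤ a * Rbar x + b * Rbar y := by
    intro x y a b ha hb hab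
    refine le_of_forall_pos_le_add ?_
    intro ε hε
    have hx : (⨅ δ' : Δ, (R δ' + (L : ℝ) * ‖x - (δ' : EuclideanSpace ℝ (Fin d))‖)) < Rbar x + ε := by
      rw [← hRbar]; linarith
    obtain ⟨i, hi⟩ := exists_lt_of_ciInf_lt hx
    have hy : (⨅ δ' : Δ, (R δ' + (L : ℝ) * ‖y - (δ' : EuclideanSpace ℝ (Fin d))‖)) < Rbar y + ε := by
      rw [← hRbar]; linarith
    obtain ⟨j, hj⟩ := exists_lt_of_ciInf_lt hy
    set k : ↥Δ := ⟨a • (i : EuclideanSpace ℝ (Fin d)) + b • (j : EuclideanSpace ℝ (Fin d)), hΔconv i.2 j.2 ha hb hab⟩ with hk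
    have h1 : Rbar (a • x + b • y) ≤ R k + (L:ℝ) * ‖(a • x + b • y) - (k : EuclideanSpace ℝ (Fin d))‖ :=
      hRbarle _ k
    have h2 : R (k : EuclideanSpace ℝ (Fin d)) ≤ a * R i + b * R j := hRconv.2 i.2 j.2 ha hb hab
    have h3 : (a • x + b • y) - (k : EuclideanSpace ℝ (Fin d)) = a • (x - (i:EuclideanSpace ℝ (Fin d))) + b • (y - (j:EuclideanSpace ℝ (Fin d))) := by
      rw [hk]
      simp only
      rw [smul_sub, smul_sub]
      abel
    have h4 : ‖(a • x + b • y) - (k : EuclideanSpace ℝ (Fin d))‖ ≤ a * ‖x - (i:EuclideanSpace ℝ (Fin d))‖ + b * ‖y - (j:EuclideanSpace ℝ (Fin d))‖ := by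
      rw [h3]
      refine le_trans (norm_add_le _ _) ?_
      rw [norm_smul, norm_smul, Real.norm_eq_abs, Real.norm_eq_abs,
        abs_of_nonneg ha, abs_of_nonneg hb]
    have h5 : R i + (L:ℝ) * ‖x - (i : EuclideanSpace ℝ (Fin d))‖ < Rbar x + ε := hi
    have h6 : R j + (L:ℝ) * ‖y - (j : EuclideanSpace ℝ (Fin d))‖ < Rbar y + ε := hj
    nlinarith [h1, h2, h4, h5, h6, hL, ha, hb, hab,
      mul_le_mul_of_nonneg_left h4 hL]
  -- apply the decomposition lemma
  have hγnorm : ‖γt - δt‖ ≤ diam Δ := by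
    have := mem_closedBall.mp hγmem
    rwa [dist_eq_norm] at this
  obtain ⟨g, β, hβ, hdecomp, hsub⟩ := subgradDecomp Rbar (L:ℝ) hL hconv hlip
    (diam Δ) hdiam δt γt lamt hγnorm
    (by
      intro z hz
      exact hγmax z (mem_closedBall.mpr (by rwa [dist_eq_norm])))
  -- g belongs to Λ and C
  have hgΛ : g ∈ Λ := by
    rw [hΛ]
    refine mem_iUnion₂.mpr ⟨γt, ?_, hsub⟩
    exact mem_iUnion₂.mpr ⟨δt, hδt, hγmem⟩
  have h2η : (0:ℝ) ≤ 2 * η * diam Δ := by positivity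
  have hgC : g ∈ C := by
    rw [hC]
    exact ⟨g, subset_convexHull ℝ Λ hgΛ, 0, by simpa [mem_closedBall] using h2η, add_zero g⟩
  have hCconv : Convex ℝ C := hC ▸ (convex_convexHull ℝ Λ).add (convex_closedBall 0 _)
  have hCne : C.Nonempty := ⟨g, hgC⟩
  have hlamt1 : lamt1 = g + (β - η) • (γt - δt) := by
    rw [hrec, hdecomp]
    module
  by_cases hβη : β ≤ η
  · -- λ_{t+1} lands inside C
    have hmemC : lamt1 ∈ C := by
      rw [hC, hlamt1]
      refine ⟨g, subset_convexHull ℝ Λ hgΛ, (β - η) • (γt - δt), ?_, rfl⟩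
      have hb1 : ‖(β - η) • (γt - δt)‖ ≤ 2 * η * diam Δ := by
        rw [norm_smul, Real.norm_eq_abs, abs_of_nonpos (by linarith : β - η ≤ 0)]
        have hb2 : -(β - η) ≤ η := by linarith
        have hb3 : (-(β - η)) * ‖γt - δt‖ ≤ η * diam Δ :=
          mul_le_mul hb2 hγnorm (norm_nonneg _) hη.le
        nlinarith [hb3, hη, hdiam]
      exact mem_closedBall.mpr (by rwa [dist_zero_right])
    rw [infDist_zero_of_mem hmemC]
    exact infDist_nonneg
  · push_neg at hβη
    have hβpos : 0 < β := lt_trans hη hβη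
    set θ : ℝ := η / β with hθ
    have hθpos : 0 < θ := div_pos hη hβpos
    have hθlt : θ < 1 := (div_lt_one hβpos).mpr hβη
    have hθβ : θ * β = η := div_mul_cancel₀ η hβpos.ne'
    refine le_of_forall_pos_le_add ?_
    intro ε hε
    obtain ⟨p, hpC, hp⟩ := (infDist_lt_iff hCne).mp
      (show Metric.infDist lamt C < Metric.infDist lamt C + ε by linarith)
    set pθ : EuclideanSpace ℝ (Fin d) := (1 - θ) • p + θ • g with hpθ
    have hpθC : pθ ∈ C := hCconv hpC hgC (by linarith) hθpos.le (by ring)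
    have hcoef : β - η = (1 - θ) * β := by
      rw [sub_mul, one_mul]
      linarith [hθβ]
    have hkey : lamt1 - pθ = (1 - θ) • (lamt - p) := by
      rw [hlamt1, hdecomp, hpθ, hcoef]
      module
    have h1 : Metric.infDist lamt1 C ≤ dist lamt1 pθ := infDist_le_dist_of_mem hpθC
    have h2 : dist lamt1 pθ = (1 - θ) * dist lamt p := by
      rw [dist_eq_norm, dist_eq_norm, hkey, norm_smul, Real.norm_eq_abs,
        abs_of_nonneg (by linarith : (0:ℝ) ≤ 1 - θ)]
    have h3 : (1 - θ) * dist lamt p ≤ dist lamt p := by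
      nlinarith [dist_nonneg (x := lamt) (y := p), hθpos]
    linarith
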